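/- Let $K^{(k+1)}$ be a dynamic controller with state-space $(A_K,B_K,C_K,D_K)$, and for a fixed index pair $(i,j)$ define $\tilde{K}^\star = (A_K,\ B_K e_j e_j^T,\ e_i e_i^T C_K,\ 0)$ and $\tilde{K}^{(k)} = K^{(k+1)} - \tilde{K}^\star$ with the natural stacked realization $(\mathrm{diag}(A_K,A_K),\ (B_K; B_Ke_je_j^T),\ (C_K,\ -e_ie_i^TC_K),\ D_K)$. Let $\tilde{P}^{(k)}=\mathcal{C}(P,\tilde{K}^{(k)})$. Then $\mathrm{eig}(A_{CL}(\tilde{P}^{(k)},\tilde{K}^\star)) = \mathrm{eig}(A_{CL}(P,K^{(k+1)})) \cup \mathrm{eig}(A_K)$. -/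

import Mathlib

open Matrix

/-- Closed-loop dynamics matrix for a dynamic controller `(AK, BK, CK, DK)`. -/
noncomputable def AclD {n k p q : Type*}
    [Fintype n] [DecidableEq n] [Fintype k] [DecidableEq k]
    [Fintype p] [DecidableEq p] [Fintype q] [DecidableEq q]
    (AP : Matrix n n ℂ) (BP : Matrix n p ℂ) (CP : Matrix q n ℂ) (DP : Matrix q p ℂ)
    (AK : Matrix k k ℂ) (BK : Matrix k q ℂ) (CK : Matrix p k ℂ) (DK : Matrix p q ℂ) :
    Matrix (n ⊕ k) (n ⊕ k) ℂ :=
  Matrix.fromBlocks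
    (AP + BP * (1 - DK * DP)⁻¹ * DK * CP) (BP * (1 - DK * DP)⁻¹ * CK)
    (BK * (1 - DP * DK)⁻¹ * CP) (AK + BK * DP * (1 - DK * DP)⁻¹ * CK)


section AuxSpec

variable {m n : Type*} [Fintype m] [DecidableEq m] [Fintype n] [DecidableEq n]

lemma spec_fromBlocks21 (A : Matrix m m ℂ) (B : Matrix m n ℂ) (D : Matrix n n ℂ) :
    spectrum ℂ (Matrix.fromBlocks A B 0 D) = spectrum ℂ A ∪ spectrum ℂ D := by
  ext μ
  have h1 : algebraMap ℂ (Matrix (m ⊕ n) (m ⊕ n) ℂ) μ - fromBlocks A B 0 D =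
      fromBlocks (algebraMap ℂ (Matrix m m ℂ) μ - A) (-B) 0
        (algebraMap ℂ (Matrix n n ℂ) μ - D) := by
    simp only [Algebra.algebraMap_eq_smul_one, ← fromBlocks_one, fromBlocks_smul,
      sub_eq_add_neg, fromBlocks_neg, fromBlocks_add]
    simp
  simp only [spectrum.mem_iff, Set.mem_union, h1, Matrix.isUnit_iff_isUnit_det,
    det_fromBlocks_zero₂₁, isUnit_iff_ne_zero, ne_eq, not_not, mul_eq_zero]

lemma spec_fromBlocks12 (A : Matrix m m ℂ) (C : Matrix n m ℂ) (D : Matrix n n ℂ) :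
    spectrum ℂ (Matrix.fromBlocks A 0 C D) = spectrum ℂ A ∪ spectrum ℂ D := by
  ext μ
  have h1 : algebraMap ℂ (Matrix (m ⊕ n) (m ⊕ n) ℂ) μ - fromBlocks A 0 C D =
      fromBlocks (algebraMap ℂ (Matrix m m ℂ) μ - A) 0 (-C)
        (algebraMap ℂ (Matrix n n ℂ) μ - D) := by
    simp only [Algebra.algebraMap_eq_smul_one, ← fromBlocks_one, fromBlocks_smul,
      sub_eq_add_neg, fromBlocks_neg, fromBlocks_add]
    simp
  simp only [spectrum.mem_iff, Set.mem_union, h1, Matrix.isUnit_iff_isUnit_det,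
    det_fromBlocks_zero₁₂, isUnit_iff_ne_zero, ne_eq, not_not, mul_eq_zero]

lemma spec_conj (T A T' : Matrix m m ℂ) (h : T * T' = 1) :
    spectrum ℂ (T * A * T') = spectrum ℂ A := by
  have h' : T' * T = 1 := mul_eq_one_comm.mp h
  exact spectrum.units_conjugate (u := ⟨T, T', h, h'⟩)

lemma spec_reindex (e : m ≃ n) (A : Matrix m m ℂ) :
    spectrum ℂ (Matrix.reindex e e A) = spectrum ℂ A :=
  AlgEquiv.spectrum_eq (Matrix.reindexAlgEquiv ℂ ℂ e) A


section Aux2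
open Matrix
variable {p q : Type*} [Fintype p] [DecidableEq p] [Fintype q] [DecidableEq q]
variable {m n r : Type*}

lemma fromColumns_add' (A₁ : Matrix m n ℂ) (A₂ : Matrix m r ℂ) (B₁ : Matrix m n ℂ)
    (B₂ : Matrix m r ℂ) :
    fromCols A₁ A₂ + fromCols B₁ B₂ = fromCols (A₁ + B₁) (A₂ + B₂) := by
  ext _ (_ | _) <;> simp

lemma fromRows_add' (A₁ : Matrix m n ℂ) (A₂ : Matrix r n ℂ) (B₁ : Matrix m n ℂ)
    (B₂ : Matrix r n ℂ) :
    fromRows A₁ A₂ + fromRows B₁ B₂ = fromRows (A₁ + B₁) (A₂ + B₂) := by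
  ext (_ | _) _ <;> simp

lemma conj_fromBlocks (X : Matrix q p ℂ) (G11 : Matrix p p ℂ) (G12 : Matrix p q ℂ)
    (G21 : Matrix q p ℂ) (G22 : Matrix q q ℂ) :
    fromBlocks (1 : Matrix p p ℂ) (0 : Matrix p q ℂ) X (1 : Matrix q q ℂ) *
        fromBlocks G11 G12 G21 G22 *
        fromBlocks (1 : Matrix p p ℂ) (0 : Matrix p q ℂ) (-X) (1 : Matrix q q ℂ) =
      fromBlocks (G11 + G12 * (-X)) G12
        (X * G11 + G21 + (X * G12 + G22) * (-X)) (X * G12 + G22) := by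
  simp only [Matrix.fromBlocks_multiply, Matrix.one_mul, Matrix.mul_one, Matrix.zero_mul,
    Matrix.mul_zero, add_zero, zero_add]

lemma TTinv (X : Matrix q p ℂ) :
    fromBlocks (1 : Matrix p p ℂ) (0 : Matrix p q ℂ) X (1 : Matrix q q ℂ) *
      fromBlocks (1 : Matrix p p ℂ) (0 : Matrix p q ℂ) (-X) (1 : Matrix q q ℂ) = 1 := by
  simp only [Matrix.fromBlocks_multiply, Matrix.one_mul, Matrix.mul_one, Matrix.zero_mul,
    Matrix.mul_zero, add_zero, zero_add, add_neg_cancel, Matrix.fromBlocks_one]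

end Aux2
end AuxSpec

/-- Splitting a dynamic controller `K⁽ᵏ⁺¹⁾` into `K̃⋆` (the dynamics of its
`(i,j)` entry) and `K̃⁽ᵏ⁾ = K⁽ᵏ⁺¹⁾ - K̃⋆` (in the natural stacked realization),
the spectrum of the closed loop of `K̃⋆` around `P̃⁽ᵏ⁾ = C(P, K̃⁽ᵏ⁾)` equals that of
the closed loop of `K⁽ᵏ⁺¹⁾` around `P`, together with the eigenvalues of `A_K`. -/
theorem stmt_13 {n k nu ny : ℕ}
    (AP : Matrix (Fin n) (Fin n) ℂ) (BP : Matrix (Fin n) (Fin nu) ℂ)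
    (CP : Matrix (Fin ny) (Fin n) ℂ) (DP : Matrix (Fin ny) (Fin nu) ℂ)
    (AK : Matrix (Fin k) (Fin k) ℂ) (BK : Matrix (Fin k) (Fin ny) ℂ)
    (CK : Matrix (Fin nu) (Fin k) ℂ) (DK : Matrix (Fin nu) (Fin ny) ℂ)
    (i : Fin nu) (j : Fin ny)
    (hw : IsUnit (1 - DK * DP))
    (M : Matrix (Fin nu) (Fin nu) ℂ) (hM : M = (1 - DK * DP)⁻¹)
    (N : Matrix (Fin ny) (Fin ny) ℂ) (hN : N = (1 - DP * DK)⁻¹)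
    (Bstar : Matrix (Fin k) (Fin ny) ℂ)
    (hBstar : Bstar = BK * Matrix.single j j (1 : ℂ))
    (Cstar : Matrix (Fin nu) (Fin k) ℂ)
    (hCstar : Cstar = Matrix.single i i (1 : ℂ) * CK)
    (Atk : Matrix (Fin k ⊕ Fin k) (Fin k ⊕ Fin k) ℂ)
    (hAtk : Atk = Matrix.fromBlocks AK 0 0 AK)
    (Btk : Matrix (Fin k ⊕ Fin k) (Fin ny) ℂ)
    (hBtk : Btk = Matrix.fromRows BK Bstar)
    (Ctk : Matrix (Fin nu) (Fin k ⊕ Fin k) ℂ)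
    (hCtk : Ctk = Matrix.fromCols CK (-Cstar))
    (Ak' : Matrix (Fin n ⊕ (Fin k ⊕ Fin k)) (Fin n ⊕ (Fin k ⊕ Fin k)) ℂ)
    (hAk' : Ak' = AclD AP BP CP DP Atk Btk Ctk DK)
    (Bk' : Matrix (Fin n ⊕ (Fin k ⊕ Fin k)) (Fin nu) ℂ)
    (hBk' : Bk' = Matrix.fromRows (BP * M) (Btk * DP * M))
    (Ck' : Matrix (Fin ny) (Fin n ⊕ (Fin k ⊕ Fin k)) ℂ)
    (hCk' : Ck' = Matrix.fromCols (N * CP) (DP * M * Ctk)) :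
    spectrum ℂ (AclD Ak' Bk' Ck' (DP * M) AK Bstar Cstar 0) =
      spectrum ℂ (AclD AP BP CP DP AK BK CK DK) ∪ spectrum ℂ AK := by

  classical
  have hG : AclD Ak' Bk' Ck' (DP * M) AK Bstar Cstar 0 =
      fromBlocks Ak' (Bk' * Cstar) (Bstar * Ck') (AK + Bstar * (DP * M) * Cstar) := by
    simp [AclD]
  have hAk2 : Ak' = fromBlocks
      (AP + BP * M * DK * CP)
      (fromCols (BP * M * CK) (-(BP * M * Cstar)))
      (fromRows (BK * N * CP) (Bstar * N * CP))
      (fromBlocks (AK + BK * DP * M * CK) (-(BK * DP * M * Cstar))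
        (Bstar * DP * M * CK) (AK + -(Bstar * DP * M * Cstar))) := by
    rw [hAk', hCtk, hBtk, hAtk]
    simp only [AclD, ← hM, ← hN]
    simp [Matrix.mul_fromCols, Matrix.fromRows_mul, Matrix.fromRows_mul_fromCols,
      Matrix.fromBlocks_add, Matrix.mul_neg]
  have hG12 : Bk' * Cstar = fromRows (BP * M * Cstar)
      (fromRows (BK * DP * M * Cstar) (Bstar * DP * M * Cstar)) := by
    rw [hBk', hBtk]
    simp [Matrix.fromRows_mul]
  have hG21 : Bstar * Ck' = fromCols (Bstar * (N * CP))
      (fromCols (Bstar * (DP * M * CK)) (-(Bstar * (DP * M * Cstar)))) := by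
    rw [hCk', hCtk]
    simp [Matrix.mul_fromCols, Matrix.mul_neg]
  set X : Matrix (Fin k) (Fin n ⊕ (Fin k ⊕ Fin k)) ℂ :=
    fromCols 0 (fromCols 0 (-1)) with hX
  have ha : X * (Bk' * Cstar) + (AK + Bstar * (DP * M) * Cstar) = AK := by
    rw [hG12, hX]
    simp [Matrix.fromCols_mul_fromRows, Matrix.neg_mul, Matrix.mul_assoc]
  have hb : Ak' + (Bk' * Cstar) * (-X) = fromBlocks
      (AP + BP * M * DK * CP)
      (fromCols (BP * M * CK) 0)
      (fromRows (BK * N * CP) (Bstar * N * CP))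
      (fromBlocks (AK + BK * DP * M * CK) 0 (Bstar * DP * M * CK) AK) := by
    rw [hAk2, hG12, hX]
    simp [Matrix.mul_neg, Matrix.fromRows_mul_fromCols, Matrix.mul_fromCols,
      Matrix.fromRows_mul, Matrix.fromRows_fromCols_eq_fromBlocks,
      Matrix.fromBlocks_add, fromColumns_add', Matrix.fromCols_neg,
      Matrix.fromBlocks_neg, Matrix.mul_zero, Matrix.mul_one]
    ext r c
    rcases r with r | r | r <;> rcases c with c | c | c <;>
      simp [Matrix.fromBlocks, Matrix.fromCols, Matrix.fromRows_apply_inl, Matrix.fromRows_apply_inr, Matrix.mul_assoc] <;> abel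
  have hc : X * Ak' + Bstar * Ck' + AK * (-X) = 0 := by
    rw [hAk2, hG21, hX]
    simp [Matrix.mul_neg, Matrix.neg_mul, Matrix.fromCols_mul_fromBlocks,
      Matrix.fromCols_mul_fromRows, Matrix.mul_fromCols,
      fromColumns_add', Matrix.fromCols_neg, Matrix.mul_zero, Matrix.mul_one,
      Matrix.zero_mul, Matrix.one_mul]
    ext r c
    rcases c with c | c | c <;>
      simp [Matrix.fromBlocks, Matrix.fromCols, Matrix.fromRows_apply_inl, Matrix.fromRows_apply_inr, Matrix.mul_assoc] <;> abel
  set W : Matrix (Fin n ⊕ (Fin k ⊕ Fin k)) (Fin n ⊕ (Fin k ⊕ Fin k)) ℂ := fromBlocks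
      (AP + BP * M * DK * CP)
      (fromCols (BP * M * CK) 0)
      (fromRows (BK * N * CP) (Bstar * N * CP))
      (fromBlocks (AK + BK * DP * M * CK) 0 (Bstar * DP * M * CK) AK) with hW
  have hkey : fromBlocks (1 : Matrix (Fin n ⊕ (Fin k ⊕ Fin k)) (Fin n ⊕ (Fin k ⊕ Fin k)) ℂ)
        (0 : Matrix (Fin n ⊕ (Fin k ⊕ Fin k)) (Fin k) ℂ) X (1 : Matrix (Fin k) (Fin k) ℂ) *
      AclD Ak' Bk' Ck' (DP * M) AK Bstar Cstar 0 *
      fromBlocks (1 : Matrix (Fin n ⊕ (Fin k ⊕ Fin k)) (Fin n ⊕ (Fin k ⊕ Fin k)) ℂ)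
        (0 : Matrix (Fin n ⊕ (Fin k ⊕ Fin k)) (Fin k) ℂ) (-X) (1 : Matrix (Fin k) (Fin k) ℂ) =
      fromBlocks W (Bk' * Cstar) 0 AK := by
    rw [hG, conj_fromBlocks, ha, hb, hc]
  have h1 : spectrum ℂ (AclD Ak' Bk' Ck' (DP * M) AK Bstar Cstar 0) =
      spectrum ℂ (fromBlocks W (Bk' * Cstar) 0 AK) := by
    rw [← hkey]
    exact (spec_conj _ _ _ (TTinv X)).symm
  rw [h1, spec_fromBlocks21]
  have hP : AclD AP BP CP DP AK BK CK DK = fromBlocks (AP + BP * M * DK * CP)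
      (BP * M * CK) (BK * N * CP) (AK + BK * DP * M * CK) := by
    simp only [AclD, ← hM, ← hN]
  have hre : Matrix.reindex (Equiv.sumAssoc (Fin n) (Fin k) (Fin k)).symm
        (Equiv.sumAssoc (Fin n) (Fin k) (Fin k)).symm W =
      fromBlocks (AclD AP BP CP DP AK BK CK DK) 0
        (fromCols (Bstar * N * CP) (Bstar * DP * M * CK)) AK := by
    rw [hP, hW]
    ext r c
    rcases r with (r | r) | r <;> rcases c with (c | c) | c <;>
      simp [Matrix.fromBlocks, Matrix.fromCols, Matrix.fromRows_apply_inl, Matrix.fromRows_apply_inr, Equiv.sumAssoc]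
  have hWspec : spectrum ℂ W = spectrum ℂ (AclD AP BP CP DP AK BK CK DK) ∪ spectrum ℂ AK := by
    rw [← spec_reindex (Equiv.sumAssoc (Fin n) (Fin k) (Fin k)).symm W, hre, spec_fromBlocks12]
  rw [hWspec, Set.union_assoc, Set.union_self]
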